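/- arXiv:1907.01366 — 2 statements merged into one kernel-verified Lean document; each statement's English description precedes it below -/
import Mathlib

section
/- Let E be a C*-correspondence over a C*-algebra A, and let (π, t) be a rigged representation of E on a Hilbert space K that is a c-dilation of a completely contractive representation (ρ∘ι, ρ∘T) on a subspace H ⊆ K, where (ρ∘ι, ρ∘T) is itself rigged. Then H is reducing for the representation, i.e. the dilation decomposes as a direct sum: π = (ρ∘ι) ⊕ σ and t = (ρ∘T) ⊕ s for suitable maps σ, s. -/
/-- A C*-correspondence structure on a normed space `E` over a C*-algebra `A`:
an `A`-valued inner product, a right `A`-action, and a left `A`-action by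
adjointable (bounded) operators. -/
structure CorrData (A : Type*) [NonUnitalCStarAlgebra A] [PartialOrder A] [StarOrderedRing A]
    (E : Type*) [NormedAddCommGroup E] [NormedSpace ℂ E] where
  inner : E → E → A
  rsmul : E → A → E
  lsmul : A → E →L[ℂ] E
  inner_add_left : ∀ x y z, inner (x + y) z = inner x z + inner y z
  inner_add_right : ∀ x y z, inner x (y + z) = inner x y + inner x z
  inner_smul_right : ∀ (c : ℂ) (x y : E), inner x (c • y) = c • inner x y
  star_inner : ∀ x y, star (inner x y) = inner y x
  inner_self_nonneg : ∀ x, 0 ≤ inner x x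
  inner_rsmul_right : ∀ x y a, inner x (rsmul y a) = inner x y * a
  rsmul_add : ∀ x a b, rsmul x (a + b) = rsmul x a + rsmul x b
  add_rsmul : ∀ x y a, rsmul (x + y) a = rsmul x a + rsmul y a
  rsmul_mul : ∀ x a b, rsmul (rsmul x a) b = rsmul x (a * b)
  lsmul_add : ∀ a b, lsmul (a + b) = lsmul a + lsmul b
  lsmul_mul : ∀ a b, lsmul (a * b) = (lsmul a).comp (lsmul b)
  lsmul_adjoint : ∀ a x y, inner (lsmul a x) y = inner x (lsmul (star a) y)
  norm_eq : ∀ x, ‖x‖ = Real.sqrt ‖inner x x‖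

/-- A rigged (isometric) representation `(π, t)` of a C*-correspondence in a
C*-algebra `C`. -/
def IsRiggedRep {A : Type*} [NonUnitalCStarAlgebra A] [PartialOrder A] [StarOrderedRing A]
    {E : Type*} [NormedAddCommGroup E] [NormedSpace ℂ E]
    {C : Type*} [NonUnitalCStarAlgebra C]
    (c : CorrData A E) (π : A →⋆ₙₐ[ℂ] C) (t : E →ₗ[ℂ] C) : Prop :=
  (∀ (a b : A) (x : E), π a * t x * π b = t (c.lsmul a (c.rsmul x b))) ∧
  (∀ x y : E, star (t x) * t y = π (c.inner x y))

/-- `(T, π, t)` is a universal rigged representation: the Toeplitz–Pimsner algebra. -/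
def IsUniversalToeplitz {A : Type*} [NonUnitalCStarAlgebra A] [PartialOrder A]
    [StarOrderedRing A] {E : Type*} [NormedAddCommGroup E] [NormedSpace ℂ E]
    (c : CorrData A E) (T : Type*) [NonUnitalCStarAlgebra T]
    (π : A →⋆ₙₐ[ℂ] T) (t : E →ₗ[ℂ] T) : Prop :=
  IsRiggedRep c π t ∧
  ∀ (C : Type) (_ : NonUnitalCStarAlgebra C), ∀ (π' : A →⋆ₙₐ[ℂ] C) (t' : E →ₗ[ℂ] C),
    IsRiggedRep c π' t' →
    ∃! ρ : T →⋆ₙₐ[ℂ] C, (∀ a, ρ (π a) = π' a) ∧ (∀ x, ρ (t x) = t' x)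

/-- A realization of the spatial (minimal) tensor product of C*-algebras:
a bilinear map `j : A × B → T` which is multiplicative, star-preserving,
cross-norm multiplicative on elementary tensors, and has dense range span. -/
def IsCStarTensor {A B T : Type*} [NonUnitalCStarAlgebra A] [NonUnitalCStarAlgebra B]
    [NonUnitalCStarAlgebra T] (j : A →ₗ[ℂ] B →ₗ[ℂ] T) : Prop :=
  (∀ (a a' : A) (b b' : B), j a b * j a' b' = j (a * a') (b * b')) ∧
  (∀ a b, star (j a b) = j (star a) (star b)) ∧
  (∀ a b, ‖j a b‖ = ‖a‖ * ‖b‖) ∧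
  (Submodule.span ℂ {x : T | ∃ a b, x = j a b}).topologicalClosure = ⊤

open scoped InnerProductSpace

/-- If the compression identities hold at the level of `V* P V`, `V* P* V`, and
`V* P* P V`, then `V` intertwines `P₀` and `P`. -/
lemma key_intertwine
    {H K : Type} [NormedAddCommGroup H] [InnerProductSpace ℂ H] [CompleteSpace H]
    [NormedAddCommGroup K] [InnerProductSpace ℂ K] [CompleteSpace K]
    (Vc : H →L[ℂ] K)
    (hV : (ContinuousLinearMap.adjoint Vc).comp Vc = ContinuousLinearMap.id ℂ H)
    (P : K →L[ℂ] K) (P₀ : H →L[ℂ] H)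
    (h1 : (ContinuousLinearMap.adjoint Vc).comp (P.comp Vc) = P₀)
    (h3 : (ContinuousLinearMap.adjoint Vc).comp
        (((ContinuousLinearMap.adjoint P).comp P).comp Vc)
      = (ContinuousLinearMap.adjoint P₀).comp P₀) :
    ∀ h : H, P (Vc h) = Vc (P₀ h) := by
  have h2 : (ContinuousLinearMap.adjoint Vc).comp
      ((ContinuousLinearMap.adjoint P).comp Vc) = ContinuousLinearMap.adjoint P₀ := by
    have := congrArg ContinuousLinearMap.adjoint h1
    simpa [ContinuousLinearMap.adjoint_comp, ContinuousLinearMap.adjoint_adjoint,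
      ContinuousLinearMap.comp_assoc] using this
  set W : H →L[ℂ] K := P.comp Vc - Vc.comp P₀ with hW
  have hWadj : ContinuousLinearMap.adjoint W =
      (ContinuousLinearMap.adjoint Vc).comp (ContinuousLinearMap.adjoint P)
        - (ContinuousLinearMap.adjoint P₀).comp (ContinuousLinearMap.adjoint Vc) := by
    simp [hW, map_sub, ContinuousLinearMap.adjoint_comp]
  have hzero : (ContinuousLinearMap.adjoint W).comp W = 0 := by
    rw [hWadj, hW]
    ext h
    simp only [ContinuousLinearMap.comp_apply, ContinuousLinearMap.sub_apply,
      ContinuousLinearMap.zero_apply, map_sub]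
    have e1 : (ContinuousLinearMap.adjoint Vc) ((ContinuousLinearMap.adjoint P)
        (P (Vc h))) = (ContinuousLinearMap.adjoint P₀) (P₀ h) := by
      have := congrFun (congrArg DFunLike.coe h3) h
      simpa using this
    have e2 : (ContinuousLinearMap.adjoint Vc) ((ContinuousLinearMap.adjoint P)
        (Vc (P₀ h))) = (ContinuousLinearMap.adjoint P₀) (P₀ h) := by
      have := congrFun (congrArg DFunLike.coe h2) (P₀ h)
      simpa using this
    have e3 : (ContinuousLinearMap.adjoint Vc) (P (Vc h)) = P₀ h := by
      have := congrFun (congrArg DFunLike.coe h1) h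
      simpa using this
    have e4 : (ContinuousLinearMap.adjoint Vc) (Vc (P₀ h)) = P₀ h := by
      have := congrFun (congrArg DFunLike.coe hV) (P₀ h)
      simpa using this
    rw [e1, e2, e3, e4]
    abel
  intro h
  have hw : W h = 0 := by
    rw [← inner_self_eq_zero (𝕜 := ℂ)]
    have : ⟪W h, W h⟫_ℂ = ⟪h, (ContinuousLinearMap.adjoint W) (W h)⟫_ℂ := by
      rw [ContinuousLinearMap.adjoint_inner_right]
    rw [this]
    have : (ContinuousLinearMap.adjoint W) (W h)
        = ((ContinuousLinearMap.adjoint W).comp W) h := rfl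
    rw [this, hzero]
    simp
  have := sub_eq_zero.mp (by simpa [hW, ContinuousLinearMap.sub_apply] using hw)
  simpa using this

/-- If `(π, t)` is a rigged representation of a C*-correspondence `E` on a Hilbert space
`K` which is a c-dilation (through the isometry `V : H → K`, with the copy of `H`
co-invariant) of a representation `(π₀, t₀)` on `H` which is itself rigged, then the
copy of `H` is reducing and the dilation decomposes as a direct sum: `V` intertwines
`(π₀, t₀)` with `(π, t)`, and the orthogonal complement of the range of `V` is
invariant. -/
theorem rigged_cDilation_of_rigged_decomposes
    {A : Type} [NonUnitalCStarAlgebra A] [PartialOrder A] [StarOrderedRing A]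
    {E : Type} [NormedAddCommGroup E] [NormedSpace ℂ E] (c : CorrData A E)
    {H K : Type} [NormedAddCommGroup H] [InnerProductSpace ℂ H] [CompleteSpace H]
    [NormedAddCommGroup K] [InnerProductSpace ℂ K] [CompleteSpace K]
    (V : H →ₗᵢ[ℂ] K)
    (π : A →⋆ₙₐ[ℂ] (K →L[ℂ] K)) (t : E →ₗ[ℂ] (K →L[ℂ] K))
    (hrigged : IsRiggedRep c π t)
    (π₀ : A →⋆ₙₐ[ℂ] (H →L[ℂ] H)) (t₀ : E →ₗ[ℂ] (H →L[ℂ] H))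
    (hπ₀ : ∀ a : A, π₀ a = (ContinuousLinearMap.adjoint V.toContinuousLinearMap).comp
      ((π a).comp V.toContinuousLinearMap))
    (ht₀ : ∀ x : E, t₀ x = (ContinuousLinearMap.adjoint V.toContinuousLinearMap).comp
      ((t x).comp V.toContinuousLinearMap))
    (hrigged₀ : IsRiggedRep c π₀ t₀)
    -- co-invariance of the copy of `H`
    (hco_π : ∀ (a : A) (h : H), ∃ h' : H, star (π a) (V h) = V h')
    (hco_t : ∀ (x : E) (h : H), ∃ h' : H, star (t x) (V h) = V h') :
    (∀ (a : A) (h : H), π a (V h) = V (π₀ a h)) ∧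
    (∀ (x : E) (h : H), t x (V h) = V (t₀ x h)) ∧
    (∀ (a : A) (k : K), (∀ h : H, ⟪V h, k⟫_ℂ = 0) → ∀ h : H, ⟪V h, π a k⟫_ℂ = 0) ∧
    (∀ (x : E) (k : K), (∀ h : H, ⟪V h, k⟫_ℂ = 0) → ∀ h : H, ⟪V h, t x k⟫_ℂ = 0) := by
  set Vc := V.toContinuousLinearMap with hVc
  have hV : (ContinuousLinearMap.adjoint Vc).comp Vc = ContinuousLinearMap.id ℂ H := by
    ext h
    apply ext_inner_right ℂ
    intro w
    simp only [ContinuousLinearMap.comp_apply, ContinuousLinearMap.id_apply]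
    rw [ContinuousLinearMap.adjoint_inner_left]
    simp [hVc, V.inner_map_map]
  refine ⟨?_, ?_, ?_, ?_⟩
  · -- π intertwining
    intro a h
    refine key_intertwine Vc hV (π a) (π₀ a) (hπ₀ a).symm ?_ h
    have hadjπ : ContinuousLinearMap.adjoint (π a) = π (star a) := by
      rw [← ContinuousLinearMap.star_eq_adjoint, ← map_star]
    have hadjπ₀ : ContinuousLinearMap.adjoint (π₀ a) = π₀ (star a) := by
      rw [← ContinuousLinearMap.star_eq_adjoint, ← map_star]
    rw [hadjπ, hadjπ₀]
    have : (π (star a)).comp (π a) = π (star a * a) := by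
      rw [map_mul]; rfl
    rw [this]
    have : (π₀ (star a)).comp (π₀ a) = π₀ (star a * a) := by
      rw [map_mul]; rfl
    rw [this, (hπ₀ (star a * a)).symm]
  · -- t intertwining
    intro x h
    refine key_intertwine Vc hV (t x) (t₀ x) (ht₀ x).symm ?_ h
    have h3k : (ContinuousLinearMap.adjoint (t x)).comp (t x) = π (c.inner x x) := by
      rw [← ContinuousLinearMap.star_eq_adjoint]
      exact hrigged.2 x x
    have h3h : (ContinuousLinearMap.adjoint (t₀ x)).comp (t₀ x) = π₀ (c.inner x x) := by
      rw [← ContinuousLinearMap.star_eq_adjoint]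
      exact hrigged₀.2 x x
    rw [h3k, h3h, (hπ₀ (c.inner x x)).symm]
  · -- orthogonal complement invariant under π
    intro a k hk h
    obtain ⟨h', hh'⟩ := hco_π a h
    have : ⟪V h, π a k⟫_ℂ = ⟪(ContinuousLinearMap.adjoint (π a)) (V h), k⟫_ℂ := by
      rw [ContinuousLinearMap.adjoint_inner_left]
    rw [this, ← ContinuousLinearMap.star_eq_adjoint, hh']
    exact hk h'
  · -- orthogonal complement invariant under t
    intro x k hk h
    obtain ⟨h', hh'⟩ := hco_t x h
    have : ⟪V h, t x k⟫_ℂ = ⟪(ContinuousLinearMap.adjoint (t x)) (V h), k⟫_ℂ := by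
      rw [ContinuousLinearMap.adjoint_inner_left]
    rw [this, ← ContinuousLinearMap.star_eq_adjoint, hh']
    exact hk h'
end

section
/- Let G = (V, E) be a row-finite directed graph, and realize the Toeplitz graph algebra T(G) as the C*-algebra generated by the left regular Toeplitz-Cuntz-Krieger family (L_v, L_e) on ℓ²(E•). Then the ideal I_G generated by {L_v − Σ_{e ∈ r^{-1}(v)} L_e L_e* : v ∈ V} equals ⊕_{v∈V} K(H_{G,v}) and is the minimum essential ideal of T(G): it is essential, and it is contained in every essential ideal of T(G). -/
open Classical

/-- A finite path in a directed graph `G = (V, Edg, r, s)`: a source vertex `base`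
together with a composable list of edges `e₁ e₂ ⋯ e_k` (with `s eᵢ = r eᵢ₊₁` and the
source of the last edge equal to `base`); the empty list represents the trivial path at
`base`. -/
structure GPath (V Edg : Type*) (r s : Edg → V) where
  base : V
  edges : List Edg
  chain : edges.Chain' fun e f => s e = r f
  last_src : ∀ e ∈ edges.getLast?, s e = base

/-- The range vertex of a finite path. -/
def GPath.range {V Edg : Type*} {r s : Edg → V} (p : GPath V Edg r s) : V :=
  match p.edges with
  | [] => p.base
  | e :: _ => r e

variable {V Edg : Type*} {r s : Edg → V}

/-- `(Lv, Le)` is the left regular Toeplitz–Cuntz–Krieger family of the graph on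
`ℓ²` of the finite paths: `Lv v` is the projection onto paths with range `v`, and
`Le e` prepends the edge `e` to composable paths (and kills the rest). -/
def IsLeftRegularTCK (Lv : V → (lp (fun _ : GPath V Edg r s => ℂ) 2 →L[ℂ]
      lp (fun _ : GPath V Edg r s => ℂ) 2))
    (Le : Edg → (lp (fun _ : GPath V Edg r s => ℂ) 2 →L[ℂ]
      lp (fun _ : GPath V Edg r s => ℂ) 2)) : Prop :=
  (∀ (v : V) (p : GPath V Edg r s), Lv v (lp.single 2 p 1) =
    if p.range = v then lp.single 2 p 1 else 0) ∧
  (∀ (e : Edg) (p q : GPath V Edg r s), q.base = p.base → q.edges = e :: p.edges →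
    Le e (lp.single 2 p 1) = if p.range = s e then lp.single 2 q 1 else 0) ∧
  (∀ (e : Edg) (p : GPath V Edg r s), p.range ≠ s e → Le e (lp.single 2 p 1) = 0)

/-- The Toeplitz graph C*-algebra `T(G) = C*(Lv, Le) ⊆ B(ℓ²(E•))`. -/
def toeplitzGraphAlgebra (Lv : V → (lp (fun _ : GPath V Edg r s => ℂ) 2 →L[ℂ]
      lp (fun _ : GPath V Edg r s => ℂ) 2))
    (Le : Edg → (lp (fun _ : GPath V Edg r s => ℂ) 2 →L[ℂ]
      lp (fun _ : GPath V Edg r s => ℂ) 2)) :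
    Set (lp (fun _ : GPath V Edg r s => ℂ) 2 →L[ℂ] lp (fun _ : GPath V Edg r s => ℂ) 2) :=
  ((NonUnitalStarAlgebra.adjoin ℂ (Set.range Lv ∪ Set.range Le)).topologicalClosure :
    NonUnitalStarSubalgebra ℂ _)

/-- The reducing subspace `H_{G,v}`: the closed span of the basis vectors `ξ_λ` indexed
by paths `λ` with source `v`. -/
def pathSpace (V Edg : Type*) (r s : Edg → V) (v : V) :
    Set (lp (fun _ : GPath V Edg r s => ℂ) 2) :=
  ((Submodule.span ℂ {f : lp (fun _ : GPath V Edg r s => ℂ) 2 | ∃ p : GPath V Edg r s,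
    p.base = v ∧ f = lp.single 2 p 1}).topologicalClosure : Submodule ℂ _)

/-- A closed two-sided ideal of the (concretely represented) C*-algebra `TG`. -/
def IsClosedIdealOf {H : Type*} [NormedAddCommGroup H] [InnerProductSpace ℂ H]
    [CompleteSpace H] (TG J : Set (H →L[ℂ] H)) : Prop :=
  J ⊆ TG ∧ IsClosed J ∧ (0 : H →L[ℂ] H) ∈ J ∧
  (∀ x ∈ J, ∀ y ∈ J, x + y ∈ J) ∧ (∀ (c : ℂ), ∀ x ∈ J, c • x ∈ J) ∧
  (∀ x ∈ TG, ∀ y ∈ J, x * y ∈ J ∧ y * x ∈ J)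


noncomputable section
open scoped InnerProductSpace ComplexConjugate

namespace TCKProof

local notation "H'" => lp (fun _ : GPath V Edg r s => ℂ) 2




theorem _root_.GPath.ext' {p q : GPath V Edg r s} (h1 : p.base = q.base)
    (h2 : p.edges = q.edges) : p = q := by
  cases p; cases q; simp_all

def ξ (p : GPath V Edg r s) : H' := lp.single 2 p 1

theorem xi_apply (p q : GPath V Edg r s) : (ξ p : H') q = if q = p then 1 else 0 := by
  rw [ξ, lp.single_apply]
  split
  · next h => subst h; simp
  · simp_all

theorem inner_xi_left (p : GPath V Edg r s) (f : H') : ⟪ξ p, f⟫_ℂ = f p := by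
  rw [ξ, lp.inner_single_left]
  simp [RCLike.inner_apply]

theorem inner_xi_xi (p q : GPath V Edg r s) :
    ⟪(ξ p : H'), ξ q⟫_ℂ = if p = q then 1 else 0 := by
  rw [inner_xi_left, xi_apply]

theorem xi_ne_zero (p : GPath V Edg r s) : (ξ p : H') ≠ 0 := by
  intro h
  have h2 : (ξ p : H') p = 0 := by rw [h]; rfl
  rw [xi_apply] at h2
  simp at h2

theorem hasSum_xi (f : H') : HasSum (fun p => (f p : ℂ) • (ξ p : H')) f := by
  have h := lp.hasSum_single (E := fun _ : GPath V Edg r s => ℂ) ENNReal.ofNat_ne_top f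
  convert h using 2 with p
  rw [ξ, ← lp.single_smul]
  norm_num

theorem vec_ext {x y : H'} (h : ∀ q, ⟪(ξ q : H'), x⟫_ℂ = ⟪(ξ q : H'), y⟫_ℂ) : x = y := by
  apply lp.ext
  funext q
  have := h q
  rwa [inner_xi_left, inner_xi_left] at this

theorem op_ext {T S : H' →L[ℂ] H'} (h : ∀ p, T (ξ p) = S (ξ p)) : T = S := by
  apply ContinuousLinearMap.ext
  intro x
  have hT := (hasSum_xi x).mapL T
  have hS := (hasSum_xi x).mapL S
  refine hT.unique ?_
  convert hS using 2 with p
  simp only [map_smul, h]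

theorem op_ext_zero {T : H' →L[ℂ] H'} (h : ∀ p, T (ξ p) = 0) : T = 0 :=
  op_ext (by simpa using h)

def triv (v : V) : GPath V Edg r s := ⟨v, [], List.isChain_nil, by simp⟩

@[simp] theorem triv_base (v : V) : (triv (r := r) (s := s) (Edg := Edg) v).base = v := rfl
@[simp] theorem triv_edges (v : V) : (triv (r := r) (s := s) (Edg := Edg) v).edges = [] := rfl

theorem range_of_edges_nil {p : GPath V Edg r s} (h : p.edges = []) : p.range = p.base := by
  rcases p with ⟨b, es, c, l⟩
  simp only at h
  subst h
  rfl

theorem range_of_edges_cons {p : GPath V Edg r s} {e : Edg} {l : List Edg}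
    (h : p.edges = e :: l) : p.range = r e := by
  rcases p with ⟨b, es, c, ls⟩
  simp only at h
  subst h
  rfl

@[simp] theorem triv_range (v : V) : (triv (r := r) (s := s) (Edg := Edg) v).range = v :=
  range_of_edges_nil rfl

def _root_.GPath.cons (e : Edg) (p : GPath V Edg r s) (h : p.range = s e) :
    GPath V Edg r s := by
  refine ⟨p.base, e :: p.edges, ?_, ?_⟩
  · unfold List.Chain'
    rw [List.isChain_cons]
    refine ⟨?_, p.chain⟩
    intro y hy
    rcases hq : p.edges with _ | ⟨a, t⟩
    · rw [hq] at hy; cases hy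
    · rw [hq] at hy
      simp only [List.head?_cons, Option.mem_def, Option.some.injEq] at hy
      subst hy
      rw [← h, range_of_edges_cons hq]
  · intro f hf
    rcases hq : p.edges with _ | ⟨a, t⟩
    · rw [hq] at hf
      simp only [List.getLast?_singleton, Option.mem_def, Option.some.injEq] at hf
      subst hf
      rw [← h, range_of_edges_nil hq]
    · rw [hq, List.getLast?_cons_cons] at hf
      exact p.last_src f (by rw [hq]; exact hf)

@[simp] theorem cons_base (e : Edg) (p : GPath V Edg r s) (h : p.range = s e) :
    (GPath.cons e p h).base = p.base := rfl
@[simp] theorem cons_edges (e : Edg) (p : GPath V Edg r s) (h : p.range = s e) :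
    (GPath.cons e p h).edges = e :: p.edges := rfl
theorem cons_range (e : Edg) (p : GPath V Edg r s) (h : p.range = s e) :
    (GPath.cons e p h).range = r e := range_of_edges_cons rfl

def _root_.GPath.tail (q : GPath V Edg r s) : GPath V Edg r s := by
  refine ⟨q.base, q.edges.tail, q.chain.tail, ?_⟩
  intro f hf
  rcases hq : q.edges with _ | ⟨a, t⟩
  · rw [hq] at hf; cases hf
  · rw [hq] at hf
    rcases ht : t with _ | ⟨b, t'⟩
    · rw [ht] at hf; cases hf
    · rw [ht] at hf
      refine q.last_src f ?_
      rw [hq, ht, List.getLast?_cons_cons]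
      exact hf

@[simp] theorem tail_base (q : GPath V Edg r s) : q.tail.base = q.base := rfl
@[simp] theorem tail_edges (q : GPath V Edg r s) : q.tail.edges = q.edges.tail := rfl

theorem range_tail {q : GPath V Edg r s} {e : Edg} {l : List Edg}
    (hq : q.edges = e :: l) : q.tail.range = s e := by
  rcases hl : l with _ | ⟨b, t⟩
  · have h0 : q.tail.edges = [] := by rw [tail_edges, hq, hl]; rfl
    rw [range_of_edges_nil h0, tail_base]
    exact (q.last_src e (by rw [hq, hl]; rfl)).symm
  · have h2 : q.tail.edges = b :: t := by rw [tail_edges, hq, hl]; rfl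
    rw [range_of_edges_cons h2]
    have hc := q.chain
    unfold List.Chain' at hc
    rw [hq, hl, List.isChain_cons_cons] at hc
    exact hc.1.symm

theorem cons_tail {q : GPath V Edg r s} {e : Edg} {l : List Edg} (hq : q.edges = e :: l) :
    GPath.cons e q.tail (range_tail hq) = q := by
  apply GPath.ext'
  · rw [cons_base, tail_base]
  · rw [cons_edges, tail_edges, hq]; rfl

section TCK

variable {Lv : V → (lp (fun _ : GPath V Edg r s => ℂ) 2 →L[ℂ]
      lp (fun _ : GPath V Edg r s => ℂ) 2)}
    {Le : Edg → (lp (fun _ : GPath V Edg r s => ℂ) 2 →L[ℂ]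
      lp (fun _ : GPath V Edg r s => ℂ) 2)}

variable (hT : IsLeftRegularTCK Lv Le)
include hT

theorem Lv_xi (v : V) (p : GPath V Edg r s) :
    Lv v (ξ p) = if p.range = v then ξ p else 0 := hT.1 v p

theorem Le_xi {e : Edg} {p : GPath V Edg r s} (h : p.range = s e) :
    Le e (ξ p) = ξ (GPath.cons e p h) := by
  have h2 := hT.2.1 e p (GPath.cons e p h) rfl rfl
  rw [if_pos h] at h2
  exact h2

theorem Le_xi_zero {e : Edg} {p : GPath V Edg r s} (h : p.range ≠ s e) :
    Le e (ξ p) = 0 := hT.2.2 e p h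

theorem star_Lv (v : V) : star (Lv v) = Lv v := by
  rw [ContinuousLinearMap.star_eq_adjoint]
  apply op_ext; intro p; apply vec_ext; intro q
  rw [ContinuousLinearMap.adjoint_inner_right, Lv_xi hT, Lv_xi hT]
  by_cases hpq : p = q
  · subst hpq; split_ifs <;> simp
  · have h1 : ⟪(ξ q : H'), ξ p⟫_ℂ = 0 := by
      rw [inner_xi_xi, if_neg (fun h => hpq h.symm)]
    have h1' : ⟪(ξ p : H'), ξ q⟫_ℂ = 0 := by rw [inner_xi_xi, if_neg hpq]
    split_ifs <;> simp [h1, h1']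

theorem star_Le_xi (e : Edg) (q : GPath V Edg r s) :
    star (Le e) (ξ q) =
      if h : ∃ l, q.edges = e :: l then ξ q.tail else 0 := by
  rw [ContinuousLinearMap.star_eq_adjoint]
  apply vec_ext; intro p
  rw [ContinuousLinearMap.adjoint_inner_right]
  by_cases hp : p.range = s e
  · rw [Le_xi hT hp, inner_xi_xi]
    split_ifs with h1 h2 h3
    · rcases h2 with ⟨l, hl⟩
      rw [inner_xi_xi, if_pos]
      rw [← h1]; rfl
    · exact absurd ⟨p.edges, by rw [← h1]; rfl⟩ h2
    · rcases h3 with ⟨l, hl⟩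
      rw [inner_xi_xi, if_neg]
      intro hpt
      apply h1
      subst hpt
      exact cons_tail hl
    · rw [inner_zero_right]
  · rw [Le_xi_zero hT hp, inner_zero_left]
    split_ifs with h1
    · rcases h1 with ⟨l, hl⟩
      rw [inner_xi_xi, if_neg]
      intro hpt
      exact hp (by rw [hpt, range_tail hl])
    · rw [inner_zero_right]

end TCK

def θ (w u : H') : H' →L[ℂ] H' :=
  ContinuousLinearMap.smulRightL ℂ H' H' (innerSL ℂ u) w

theorem theta_apply (w u x : H') : θ w u x = ⟪u, x⟫_ℂ • w := rfl

theorem theta_xi_xi_apply (lam mu p : GPath V Edg r s) :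
    θ (ξ lam) (ξ mu) (ξ p) = if mu = p then (ξ lam : H') else 0 := by
  rw [theta_apply, inner_xi_xi]
  split_ifs <;> simp

theorem mul_theta (T : H' →L[ℂ] H') (w u : H') : T * θ w u = θ (T w) u := by
  apply ContinuousLinearMap.ext; intro x
  simp only [ContinuousLinearMap.mul_apply, theta_apply, map_smul]

theorem theta_mul (T : H' →L[ℂ] H') (w u : H') : θ w u * T = θ w (star T u) := by
  apply ContinuousLinearMap.ext; intro x
  simp only [ContinuousLinearMap.mul_apply, theta_apply]
  rw [ContinuousLinearMap.star_eq_adjoint, ContinuousLinearMap.adjoint_inner_left]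

theorem theta_mul_theta_mul (a b c d : H') (T : H' →L[ℂ] H') :
    θ a b * T * θ c d = ⟪b, T c⟫_ℂ • θ a d := by
  apply ContinuousLinearMap.ext; intro x
  simp only [ContinuousLinearMap.mul_apply, theta_apply, map_smul,
    ContinuousLinearMap.smul_apply]
  rw [smul_comm]

theorem theta_compact (w u : H') : IsCompactOperator (θ w u : H' →L[ℂ] H') := by
  refine ⟨(fun c : ℂ => c • w) '' Metric.closedBall 0 ‖u‖,
    (isCompact_closedBall 0 ‖u‖).image (by fun_prop), ?_⟩
  refine Filter.mem_of_superset (Metric.ball_mem_nhds 0 one_pos) ?_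
  intro x hx
  refine ⟨⟪u, x⟫_ℂ, ?_, rfl⟩
  rw [Metric.mem_closedBall, dist_zero_right]
  calc ‖⟪u, x⟫_ℂ‖ ≤ ‖u‖ * ‖x‖ := norm_inner_le_norm u x
  _ ≤ ‖u‖ * 1 := by
      have := (Metric.mem_ball.mp hx)
      rw [dist_zero_right] at this
      exact mul_le_mul_of_nonneg_left this.le (norm_nonneg u)
  _ = ‖u‖ := mul_one _

theorem star_theta (w u : H') : star (θ w u) = θ u w := by
  rw [ContinuousLinearMap.star_eq_adjoint]
  apply op_ext; intro p; apply vec_ext; intro q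
  rw [ContinuousLinearMap.adjoint_inner_right, theta_apply, theta_apply,
    inner_smul_left, inner_smul_right, inner_conj_symm]
  ring

section TCK

variable {Lv : V → (lp (fun _ : GPath V Edg r s => ℂ) 2 →L[ℂ]
      lp (fun _ : GPath V Edg r s => ℂ) 2)}
    {Le : Edg → (lp (fun _ : GPath V Edg r s => ℂ) 2 →L[ℂ]
      lp (fun _ : GPath V Edg r s => ℂ) 2)}

variable (hT : IsLeftRegularTCK Lv Le)
include hT

theorem gap_apply (hfin : ∀ v : V, {e : Edg | r e = v}.Finite) (v : V) (p : GPath V Edg r s) :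
    (Lv v - ∑ e ∈ (hfin v).toFinset, Le e * star (Le e)) (ξ p) =
      if p = triv v then (ξ p : H') else 0 := by
  rw [ContinuousLinearMap.sub_apply, ContinuousLinearMap.sum_apply]
  rcases hq : p.edges with _ | ⟨e', rest⟩
  · have hsum : ∀ e ∈ (hfin v).toFinset, (Le e * star (Le e)) (ξ p) = 0 := by
      intro e _
      rw [ContinuousLinearMap.mul_apply, star_Le_xi hT, dif_neg, map_zero]
      rintro ⟨l, hl⟩
      rw [hq] at hl
      cases hl
    rw [Finset.sum_eq_zero hsum, Lv_xi hT]
    have hr : p.range = p.base := range_of_edges_nil hq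
    by_cases hb : p.base = v
    · rw [if_pos (by rw [hr, hb]), if_pos (GPath.ext' hb hq), sub_zero]
    · rw [if_neg (by rw [hr]; exact hb), if_neg (by intro h; exact hb (by rw [h]; rfl)),
        sub_zero]
  · have hne : p ≠ triv v := by
      intro h
      rw [h] at hq
      cases hq
    rw [if_neg hne]
    have htail : star (Le e') (ξ p) = ξ p.tail := by
      rw [star_Le_xi hT, dif_pos ⟨rest, hq⟩]
    have hLetail : Le e' (ξ p.tail) = ξ p := by
      rw [Le_xi hT (range_tail hq)]
      congr 1
      exact cons_tail hq
    have hterm : ∀ e ∈ (hfin v).toFinset, (Le e * star (Le e)) (ξ p) =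
        if e = e' then (ξ p : H') else 0 := by
      intro e _
      by_cases he : e = e'
      · subst he
        rw [ContinuousLinearMap.mul_apply, htail, hLetail, if_pos rfl]
      · rw [ContinuousLinearMap.mul_apply, star_Le_xi hT, dif_neg, map_zero, if_neg he]
        rintro ⟨l, hl⟩
        rw [hq] at hl
        exact he (List.cons.inj hl).1.symm
    rw [Finset.sum_congr rfl hterm, Finset.sum_ite_eq' (hfin v).toFinset e'
      (fun _ => (ξ p : H')), Lv_xi hT]
    have hr : p.range = r e' := range_of_edges_cons hq
    by_cases hv : p.range = v
    · rw [if_pos hv, if_pos (by rw [Set.Finite.mem_toFinset, Set.mem_setOf_eq, ← hr]; exact hv), sub_self]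
    · rw [if_neg hv, if_neg (by rw [Set.Finite.mem_toFinset, Set.mem_setOf_eq, ← hr]; exact hv), sub_zero]

theorem gap_eq_theta (hfin : ∀ v : V, {e : Edg | r e = v}.Finite) (v : V) :
    Lv v - ∑ e ∈ (hfin v).toFinset, Le e * star (Le e) =
      θ (ξ (triv v)) (ξ (triv v)) := by
  apply op_ext
  intro p
  rw [gap_apply hT hfin, theta_xi_xi_apply]
  by_cases h : p = triv v
  · rw [if_pos h, if_pos h.symm, h]
  · rw [if_neg h, if_neg (fun hh => h hh.symm)]

end TCK

section Lp

variable (Lv : V → (lp (fun _ : GPath V Edg r s => ℂ) 2 →L[ℂ]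
      lp (fun _ : GPath V Edg r s => ℂ) 2))
    (Le : Edg → (lp (fun _ : GPath V Edg r s => ℂ) 2 →L[ℂ]
      lp (fun _ : GPath V Edg r s => ℂ) 2))

def Lpath (b : V) : List Edg → (H' →L[ℂ] H')
  | [] => Lv b
  | e :: es => Le e * Lpath b es

variable {Lv Le}

theorem Lpath_xi (hT : IsLeftRegularTCK Lv Le) :
    ∀ (es : List Edg) (b : V) (hc : es.Chain' fun e f => s e = r f)
      (hl : ∀ e ∈ es.getLast?, s e = b),
      Lpath Lv Le b es (ξ (triv b)) = ξ (⟨b, es, hc, hl⟩ : GPath V Edg r s)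
  | [], b, hc, hl => by
      show Lv b (ξ (triv b)) = _
      rw [Lv_xi hT, if_pos (triv_range b)]
      rfl
  | e :: es, b, hc, hl => by
      show (Le e * Lpath Lv Le b es) (ξ (triv b)) =
        ξ (⟨b, e :: es, hc, hl⟩ : GPath V Edg r s)
      have hq : (⟨b, e :: es, hc, hl⟩ : GPath V Edg r s).edges = e :: es := rfl
      have h1 : Lpath Lv Le b es (ξ (triv b)) =
          ξ (⟨b, e :: es, hc, hl⟩ : GPath V Edg r s).tail :=
        Lpath_xi hT es b (⟨b, e :: es, hc, hl⟩ : GPath V Edg r s).tail.chain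
          (⟨b, e :: es, hc, hl⟩ : GPath V Edg r s).tail.last_src
      rw [ContinuousLinearMap.mul_apply, h1, Le_xi hT (range_tail hq)]
      exact congrArg ξ (cons_tail hq)

end Lp
set_option maxHeartbeats 1000000 in
theorem mem_topClosure_map {E F : Type*} [NormedAddCommGroup E] [NormedSpace ℂ E]
    [NormedAddCommGroup F] [NormedSpace ℂ F] {σ : ℂ →+* ℂ} (Φ : E →SL[σ] F) {S : Set E}
    {N : Submodule ℂ F} (hS : ∀ a ∈ S, Φ a ∈ N.topologicalClosure) {x : E}
    (hx : x ∈ (Submodule.span ℂ S).topologicalClosure) : Φ x ∈ N.topologicalClosure := by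
  have h1 : ∀ y ∈ Submodule.span ℂ S, Φ y ∈ N.topologicalClosure := by
    intro y hy
    induction hy using Submodule.span_induction with
    | mem a ha => exact hS a ha
    | zero => rw [map_zero]; exact Submodule.zero_mem _
    | add a b _ _ ha hb => rw [map_add]; exact Submodule.add_mem _ ha hb
    | smul c a _ ha => rw [map_smulₛₗ]; exact Submodule.smul_mem _ _ ha
  have hx' : x ∈ closure ((Submodule.span ℂ S : Submodule ℂ E) : Set E) := by
    rw [← Submodule.topologicalClosure_coe]; exact hx
  have h2 : Φ x ∈ closure (Φ '' ((Submodule.span ℂ S : Submodule ℂ E) : Set E)) :=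
    image_closure_subset_closure_image Φ.continuous (Set.mem_image_of_mem Φ hx')
  have h3 : closure (Φ '' ((Submodule.span ℂ S : Submodule ℂ E) : Set E)) ⊆
      (N.topologicalClosure : Set F) := by
    apply closure_minimal ?_ (Submodule.isClosed_topologicalClosure N)
    rintro _ ⟨y, hy, rfl⟩
    exact h1 y hy
  exact h3 h2

def BlkS (v : V) : Submodule ℂ H' :=
  (Submodule.span ℂ {f : H' | ∃ p : GPath V Edg r s,
    p.base = v ∧ f = lp.single 2 p 1}).topologicalClosure

theorem pathSpace_eq (v : V) : pathSpace V Edg r s v = (BlkS (r := r) (s := s) v : Set H') := rfl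

theorem xi_mem_Blk {p : GPath V Edg r s} {v : V} (h : p.base = v) : ξ p ∈ BlkS v :=
  Submodule.le_topologicalClosure _ (Submodule.subset_span ⟨p, h, rfl⟩)

theorem apply_mem_Blk {T : H' →L[ℂ] H'} {v : V}
    (h : ∀ p : GPath V Edg r s, p.base = v → T (ξ p) ∈ BlkS v)
    {x : H'} (hx : x ∈ BlkS v) : T x ∈ BlkS v := by
  refine mem_topClosure_map T ?_ hx
  rintro a ⟨p, hp, rfl⟩
  exact h p hp

section TCK

variable {Lv : V → (lp (fun _ : GPath V Edg r s => ℂ) 2 →L[ℂ]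
      lp (fun _ : GPath V Edg r s => ℂ) 2)}
    {Le : Edg → (lp (fun _ : GPath V Edg r s => ℂ) 2 →L[ℂ]
      lp (fun _ : GPath V Edg r s => ℂ) 2)}

theorem mem_TG_iff {x : H' →L[ℂ] H'} :
    x ∈ toeplitzGraphAlgebra Lv Le ↔
      x ∈ (NonUnitalStarAlgebra.adjoin ℂ
        (Set.range Lv ∪ Set.range Le)).topologicalClosure := Iff.rfl

theorem mem_TG_of_adjoin {x : H' →L[ℂ] H'}
    (hx : x ∈ NonUnitalStarAlgebra.adjoin ℂ (Set.range Lv ∪ Set.range Le)) :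
    x ∈ toeplitzGraphAlgebra Lv Le :=
  mem_TG_iff.mpr (NonUnitalStarSubalgebra.le_topologicalClosure _ hx)

theorem Lv_mem_adjoin (v : V) :
    Lv v ∈ NonUnitalStarAlgebra.adjoin ℂ (Set.range Lv ∪ Set.range Le) :=
  NonUnitalStarAlgebra.subset_adjoin ℂ _ (Or.inl ⟨v, rfl⟩)

theorem Le_mem_adjoin (e : Edg) :
    Le e ∈ NonUnitalStarAlgebra.adjoin ℂ (Set.range Lv ∪ Set.range Le) :=
  NonUnitalStarAlgebra.subset_adjoin ℂ _ (Or.inr ⟨e, rfl⟩)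

theorem gap_mem_adjoin (hfin : ∀ v : V, {e : Edg | r e = v}.Finite) (v : V) :
    Lv v - ∑ e ∈ (hfin v).toFinset, Le e * star (Le e) ∈
      NonUnitalStarAlgebra.adjoin ℂ (Set.range Lv ∪ Set.range Le) := by
  refine sub_mem (Lv_mem_adjoin v) (sum_mem ?_)
  intro e _
  exact mul_mem (Le_mem_adjoin e) (star_mem (Le_mem_adjoin e))

set_option maxHeartbeats 1000000 in
theorem Lpath_mem_adjoin (b : V) (es : List Edg) :
    Lpath Lv Le b es ∈ NonUnitalStarAlgebra.adjoin ℂ (Set.range Lv ∪ Set.range Le) := by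
  induction es with
  | nil => exact Lv_mem_adjoin b
  | cons e es ih => exact mul_mem (Le_mem_adjoin e) ih

variable (hT : IsLeftRegularTCK Lv Le)
include hT

set_option maxHeartbeats 2000000 in
/-- Every element of the Toeplitz algebra, together with its adjoint, preserves each
block `H_{G,v}`. -/
theorem TG_preserves {T : H' →L[ℂ] H'} (hTmem : T ∈ toeplitzGraphAlgebra Lv Le) :
    (∀ v : V, ∀ x ∈ BlkS (r := r) (s := s) v, T x ∈ BlkS v) ∧
      (∀ v : V, ∀ x ∈ BlkS (r := r) (s := s) v, star T x ∈ BlkS v) := by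
  set P : (H' →L[ℂ] H') → Prop := fun T =>
    (∀ v : V, ∀ x ∈ BlkS (r := r) (s := s) v, T x ∈ BlkS v) ∧
      (∀ v : V, ∀ x ∈ BlkS (r := r) (s := s) v, star T x ∈ BlkS v) with hP
  have hgen : ∀ A : H' →L[ℂ] H',
      (∀ v : V, ∀ p : GPath V Edg r s, p.base = v → A (ξ p) ∈ BlkS v) →
      (∀ v : V, ∀ x ∈ BlkS (r := r) (s := s) v, A x ∈ BlkS v) := by
    intro A hA v x hx
    exact apply_mem_Blk (hA v) hx
  have hLv : ∀ v' : V, P (Lv v') := by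
    intro v'
    have hact : ∀ v : V, ∀ p : GPath V Edg r s, p.base = v → Lv v' (ξ p) ∈ BlkS v := by
      intro v p hp
      rw [Lv_xi hT]
      split_ifs
      · exact xi_mem_Blk hp
      · exact Submodule.zero_mem _
    refine ⟨hgen _ hact, ?_⟩
    rw [star_Lv hT]
    exact hgen _ hact
  have hLe : ∀ e : Edg, P (Le e) := by
    intro e
    constructor
    · refine hgen _ ?_
      intro v p hp
      by_cases h : p.range = s e
      · rw [Le_xi hT h]
        exact xi_mem_Blk (by rw [cons_base]; exact hp)
      · rw [Le_xi_zero hT h]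
        exact Submodule.zero_mem _
    · refine hgen _ ?_
      intro v p hp
      rw [star_Le_xi hT]
      split_ifs
      · exact xi_mem_Blk (by rw [tail_base]; exact hp)
      · exact Submodule.zero_mem _
  have hadj : ∀ A ∈ NonUnitalStarAlgebra.adjoin ℂ (Set.range Lv ∪ Set.range Le), P A := by
    intro A hA
    induction hA using NonUnitalStarAlgebra.adjoin_induction with
    | mem x hx =>
        rcases hx with ⟨v', rfl⟩ | ⟨e, rfl⟩
        · exact hLv _
        · exact hLe _
    | add x y _ _ hx hy =>
        refine ⟨fun v z hz => ?_, fun v z hz => ?_⟩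
        · rw [ContinuousLinearMap.add_apply]
          exact Submodule.add_mem _ (hx.1 v z hz) (hy.1 v z hz)
        · rw [star_add, ContinuousLinearMap.add_apply]
          exact Submodule.add_mem _ (hx.2 v z hz) (hy.2 v z hz)
    | zero =>
        refine ⟨fun v z hz => ?_, fun v z hz => ?_⟩
        · rw [ContinuousLinearMap.zero_apply]; exact Submodule.zero_mem _
        · rw [star_zero, ContinuousLinearMap.zero_apply]; exact Submodule.zero_mem _
    | mul x y _ _ hx hy =>
        refine ⟨fun v z hz => ?_, fun v z hz => ?_⟩
        · rw [ContinuousLinearMap.mul_apply]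
          exact hx.1 v _ (hy.1 v z hz)
        · rw [star_mul, ContinuousLinearMap.mul_apply]
          exact hy.2 v _ (hx.2 v z hz)
    | smul c x _ hx =>
        refine ⟨fun v z hz => ?_, fun v z hz => ?_⟩
        · rw [ContinuousLinearMap.smul_apply]
          exact Submodule.smul_mem _ _ (hx.1 v z hz)
        · rw [star_smul, ContinuousLinearMap.smul_apply]
          exact Submodule.smul_mem _ _ (hx.2 v z hz)
    | star x _ hx =>
        refine ⟨hx.2, fun v z hz => ?_⟩
        rw [star_star]
        exact hx.1 v z hz
  have hclosed : IsClosed {A : H' →L[ℂ] H' | P A} := by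
    have h1 : ∀ (B : Submodule ℂ H'), IsClosed (B : Set H') →
        IsClosed {A : H' →L[ℂ] H' | ∀ x ∈ B, A x ∈ B} := by
      intro B hB
      have : {A : H' →L[ℂ] H' | ∀ x ∈ B, A x ∈ B} =
          ⋂ x ∈ B, {A : H' →L[ℂ] H' | A x ∈ B} := by
        ext A; simp
      rw [this]
      refine isClosed_biInter fun x _ => ?_
      exact IsClosed.preimage (ContinuousLinearMap.apply ℂ H' x).continuous hB
    have h2 : {A : H' →L[ℂ] H' | P A} =
        (⋂ v, {A : H' →L[ℂ] H' | ∀ x ∈ BlkS (r := r) (s := s) v, A x ∈ BlkS v}) ∩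
        (star ⁻¹' ⋂ v, {A : H' →L[ℂ] H' |
          ∀ x ∈ BlkS (r := r) (s := s) v, A x ∈ BlkS v}) := by
      ext A
      simp only [hP, Set.mem_setOf_eq, Set.mem_inter_iff, Set.mem_iInter, Set.mem_preimage]
    rw [h2]
    refine IsClosed.inter (isClosed_iInter fun v =>
      h1 _ (Submodule.isClosed_topologicalClosure _)) ?_
    exact IsClosed.preimage continuous_star (isClosed_iInter fun v =>
      h1 _ (Submodule.isClosed_topologicalClosure _))
  have : T ∈ closure {A : H' →L[ℂ] H' | P A} :=
    closure_mono (fun A hA => hadj A hA) hTmem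
  rwa [hclosed.closure_eq] at this

end TCK
/-- The finite-rank diagonal projection onto the coordinates in `F`. -/
def PF (F : Finset (GPath V Edg r s)) : H' →L[ℂ] H' := ∑ p ∈ F, θ (ξ p) (ξ p)

theorem PF_apply (F : Finset (GPath V Edg r s)) (x : H') :
    PF F x = ∑ p ∈ F, (x p : ℂ) • (ξ p : H') := by
  rw [PF, ContinuousLinearMap.sum_apply]
  refine Finset.sum_congr rfl fun p _ => ?_
  rw [theta_apply, inner_xi_left]

theorem exists_PF_approx (x : H') {ε : ℝ} (hε : 0 < ε) :
    ∃ F0 : Finset (GPath V Edg r s), ∀ F : Finset (GPath V Edg r s), F0 ⊆ F →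
      ‖x - PF F x‖ ≤ ε := by
  have h2 := hasSum_xi x
  rw [HasSum, Metric.tendsto_nhds] at h2
  have h3 := h2 ε hε
  rw [SummationFilter.unconditional_filter, Filter.eventually_atTop] at h3
  obtain ⟨F0, hF0⟩ := h3
  refine ⟨F0, fun F hF => ?_⟩
  have h4 := hF0 F hF
  rw [dist_eq_norm, ← PF_apply, norm_sub_rev] at h4
  exact h4.le

theorem norm_sub_PF_le (F : Finset (GPath V Edg r s)) (x : H') :
    ‖x - PF F x‖ ≤ ‖x‖ := by
  set u : H' := PF F x with hu
  set w : H' := x - PF F x with hw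
  have hcoord : ∀ p ∈ F, (⟪(ξ p : H'), u⟫_ℂ) = x p := by
    intro p hp
    rw [hu, PF_apply, inner_sum]
    have h5 : ∀ q ∈ F, ⟪(ξ p : H'), (x q : ℂ) • (ξ q : H')⟫_ℂ =
        if p = q then (x q : ℂ) else 0 := by
      intro q _
      rw [inner_smul_right, inner_xi_xi]
      split_ifs <;> simp
    rw [Finset.sum_congr rfl h5, Finset.sum_ite_eq]
    exact if_pos hp
  have hinner : ∀ y : H', ⟪u, y⟫_ℂ =
      ∑ p ∈ F, (starRingEnd ℂ) (x p) * ⟪(ξ p : H'), y⟫_ℂ := by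
    intro y
    rw [hu, PF_apply, sum_inner]
    exact Finset.sum_congr rfl fun p _ => by rw [inner_smul_left]
  have horth : ⟪u, w⟫_ℂ = 0 := by
    rw [hw, ← hu, inner_sub_right, sub_eq_zero, hinner x, hinner u]
    refine Finset.sum_congr rfl fun p hp => ?_
    rw [inner_xi_left, hcoord p hp]
  have hxuw : x = u + w := by rw [hw, ← hu, add_sub_cancel]
  have h2 : ‖x‖ ^ 2 = ‖u‖ ^ 2 + 2 * RCLike.re ⟪u, w⟫_ℂ + ‖w‖ ^ 2 := by
    conv_lhs => rw [hxuw]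
    exact norm_add_sq u w
  rw [horth, map_zero] at h2
  nlinarith [norm_nonneg u, norm_nonneg w, norm_nonneg x]

/-- The set of matrix units with matching bases. -/
def MUset : Set (H' →L[ℂ] H') :=
  {A | ∃ lam mu : GPath V Edg r s, lam.base = mu.base ∧ A = θ (ξ lam) (ξ mu)}

/-- The matrix units over the vertex `v`. -/
def MUv (v : V) : Set (H' →L[ℂ] H') :=
  {A | ∃ lam mu : GPath V Edg r s, lam.base = v ∧ mu.base = v ∧ A = θ (ξ lam) (ξ mu)}

def Mspan : Submodule ℂ (H' →L[ℂ] H') :=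
  (Submodule.span ℂ (MUset (r := r) (s := s))).topologicalClosure

def Mspanv (v : V) : Submodule ℂ (H' →L[ℂ] H') :=
  (Submodule.span ℂ (MUv (r := r) (s := s) v)).topologicalClosure

theorem theta_left_mem {w : H'} {v : V} (hw : w ∈ BlkS (r := r) (s := s) v)
    {mu : GPath V Edg r s} (hmu : mu.base = v) :
    θ w (ξ mu) ∈ Mspanv (r := r) (s := s) v := by
  have hw' : w ∈ (Submodule.span ℂ {f : H' | ∃ p : GPath V Edg r s,
      p.base = v ∧ f = lp.single 2 p 1}).topologicalClosure := hw
  have := mem_topClosure_map (N := Submodule.span ℂ (MUv (r := r) (s := s) v))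
    (ContinuousLinearMap.smulRightL ℂ H' H' (innerSL ℂ (ξ mu))) ?_ hw'
  · exact this
  · rintro a ⟨p, hp, rfl⟩
    exact Submodule.le_topologicalClosure _
      (Submodule.subset_span ⟨p, mu, hp, hmu, rfl⟩)

theorem theta_right_mem {u : H'} {v : V} (hu : u ∈ BlkS (r := r) (s := s) v)
    {lam : GPath V Edg r s} (hlam : lam.base = v) :
    θ (ξ lam) u ∈ Mspanv (r := r) (s := s) v := by
  have hu' : u ∈ (Submodule.span ℂ {f : H' | ∃ p : GPath V Edg r s,
      p.base = v ∧ f = lp.single 2 p 1}).topologicalClosure := hu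
  have := mem_topClosure_map (N := Submodule.span ℂ (MUv (r := r) (s := s) v))
    (((ContinuousLinearMap.smulRightL ℂ H' H' :
        (H' →L[ℂ] ℂ) →L[ℂ] H' →L[ℂ] (H' →L[ℂ] H')).flip (ξ lam)).comp
      (innerSL ℂ (E := H'))) ?_ hu'
  · exact this
  · rintro a ⟨p, hp, rfl⟩
    exact Submodule.le_topologicalClosure _
      (Submodule.subset_span ⟨lam, p, hlam, hp, rfl⟩)

theorem Mspanv_le_Mspan (v : V) :
    Mspanv (r := r) (s := s) v ≤ Mspan (r := r) (s := s) :=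
  Submodule.topologicalClosure_mono (Submodule.span_mono
    (fun A ⟨lam, mu, h1, h2, h3⟩ => ⟨lam, mu, by rw [h1, h2], h3⟩))

section TCK

variable {Lv : V → (lp (fun _ : GPath V Edg r s => ℂ) 2 →L[ℂ]
      lp (fun _ : GPath V Edg r s => ℂ) 2)}
    {Le : Edg → (lp (fun _ : GPath V Edg r s => ℂ) 2 →L[ℂ]
      lp (fun _ : GPath V Edg r s => ℂ) 2)}

variable (hT : IsLeftRegularTCK Lv Le)
include hT

theorem Lpath_xi' (p : GPath V Edg r s) :
    Lpath Lv Le p.base p.edges (ξ (triv p.base)) = ξ p :=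
  Lpath_xi hT p.edges p.base p.chain p.last_src

theorem theta_factor (hfin : ∀ v : V, {e : Edg | r e = v}.Finite)
    {lam mu : GPath V Edg r s} (h : lam.base = mu.base) :
    θ (ξ lam) (ξ mu) = Lpath Lv Le lam.base lam.edges *
      ((Lv lam.base - ∑ e ∈ (hfin lam.base).toFinset, Le e * star (Le e)) *
        star (Lpath Lv Le mu.base mu.edges)) := by
  rw [gap_eq_theta hT hfin, theta_mul, star_star, mul_theta]
  congr 1
  · rw [Lpath_xi' hT lam]
  · rw [h, Lpath_xi' hT mu]

theorem theta_mem_TG (hfin : ∀ v : V, {e : Edg | r e = v}.Finite)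
    {lam mu : GPath V Edg r s} (h : lam.base = mu.base) :
    θ (ξ lam) (ξ mu) ∈ toeplitzGraphAlgebra Lv Le := by
  rw [theta_factor hT hfin h]
  exact mem_TG_of_adjoin (mul_mem (Lpath_mem_adjoin _ _)
    (mul_mem (gap_mem_adjoin hfin _) (star_mem (Lpath_mem_adjoin _ _))))

theorem theta_mem_ideal (hfin : ∀ v : V, {e : Edg | r e = v}.Finite)
    {J : Set (H' →L[ℂ] H')} (hJ : IsClosedIdealOf (toeplitzGraphAlgebra Lv Le) J)
    (hgap : ∀ v : V, Lv v - ∑ e ∈ (hfin v).toFinset, Le e * star (Le e) ∈ J)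
    {lam mu : GPath V Edg r s} (h : lam.base = mu.base) :
    θ (ξ lam) (ξ mu) ∈ J := by
  rw [theta_factor hT hfin h]
  have h1 : (Lv lam.base - ∑ e ∈ (hfin lam.base).toFinset, Le e * star (Le e)) *
      star (Lpath Lv Le mu.base mu.edges) ∈ J :=
    (hJ.2.2.2.2.2 _ (mem_TG_of_adjoin (star_mem (Lpath_mem_adjoin _ _))) _
      (hgap lam.base)).2
  exact (hJ.2.2.2.2.2 _ (mem_TG_of_adjoin (Lpath_mem_adjoin _ _)) _ h1).1

theorem Mspan_subset_ideal {J : Set (H' →L[ℂ] H')}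
    (hJ : IsClosedIdealOf (toeplitzGraphAlgebra Lv Le) J)
    (hθ : ∀ lam mu : GPath V Edg r s, lam.base = mu.base → θ (ξ lam) (ξ mu) ∈ J) :
    (Mspan (r := r) (s := s) : Set (H' →L[ℂ] H')) ⊆ J := by
  have h1 : (Submodule.span ℂ (MUset (r := r) (s := s)) : Set (H' →L[ℂ] H')) ⊆ J := by
    intro A hA
    induction hA using Submodule.span_induction with
    | mem a ha => obtain ⟨lam, mu, hb, rfl⟩ := ha; exact hθ lam mu hb
    | zero => exact hJ.2.2.1
    | add a b _ _ ha hb => exact hJ.2.2.2.1 a ha b hb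
    | smul c a _ ha => exact hJ.2.2.2.2.1 c a ha
  have h2 : (Mspan (r := r) (s := s) : Set (H' →L[ℂ] H')) =
      closure (Submodule.span ℂ (MUset (r := r) (s := s)) : Set (H' →L[ℂ] H')) :=
    Submodule.topologicalClosure_coe _
  rw [h2]
  exact closure_minimal h1 hJ.2.1

set_option maxHeartbeats 2000000 in
theorem compact_mem_Mspan {T : H' →L[ℂ] H'} (hTG : T ∈ toeplitzGraphAlgebra Lv Le)
    (hc : IsCompactOperator (⇑T)) : T ∈ Mspan (r := r) (s := s) := by
  have hM : IsClosed (Mspan (r := r) (s := s) : Set (H' →L[ℂ] H')) :=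
    Submodule.isClosed_topologicalClosure _
  rw [← SetLike.mem_coe, ← hM.closure_eq, Metric.mem_closure_iff]
  intro ε hε
  obtain ⟨K, hK, hKsub⟩ := hc.image_ball_subset_compact (𝕜₁ := ℂ) (1 : ℝ)
  have htb := hK.totallyBounded
  rw [Metric.totallyBounded_iff] at htb
  obtain ⟨t, htfin, htsub⟩ := htb (ε / 8) (by linarith)
  have hF : ∀ y : H', ∃ F0 : Finset (GPath V Edg r s),
      ∀ F : Finset (GPath V Edg r s), F0 ⊆ F → ‖y - PF F y‖ ≤ ε / 8 :=
    fun y => exists_PF_approx y (by linarith)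
  choose Fc hFc using hF
  set F0 : Finset (GPath V Edg r s) := htfin.toFinset.sup Fc with hF0
  refine ⟨PF F0 * T, ?_, ?_⟩
  · -- membership in Mspan
    have hPT : PF (r := r) (s := s) F0 * T = ∑ p ∈ F0, θ (ξ p) (star T (ξ p)) := by
      rw [PF, Finset.sum_mul]
      exact Finset.sum_congr rfl fun p _ => theta_mul T (ξ p) (ξ p)
    rw [hPT]
    refine Submodule.sum_mem _ fun p _ => ?_
    have hstar : star T ∈ toeplitzGraphAlgebra Lv Le :=
      mem_TG_iff.mpr (star_mem (mem_TG_iff.mp hTG))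
    have hb : star T (ξ p) ∈ BlkS (r := r) (s := s) p.base :=
      (TG_preserves hT hTG).2 p.base (ξ p) (xi_mem_Blk rfl)
    exact Mspanv_le_Mspan p.base (theta_right_mem hb rfl)
  · -- distance
    rw [dist_eq_norm]
    have hbound : ‖T - PF F0 * T‖ ≤ ε / 2 := by
      refine ContinuousLinearMap.opNorm_le_of_shell (one_pos) (by linarith)
        (c := (2 : ℂ)) (by norm_num) ?_
      intro x hx1 hx2
      have hxmem : T x ∈ K := hKsub ⟨x, by simpa [Metric.mem_ball, dist_zero_right] using hx2, rfl⟩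
      have := htsub hxmem
      rw [Set.mem_iUnion₂] at this
      obtain ⟨y, hy, hxy⟩ := this
      have hFy : Fc y ⊆ F0 := Finset.le_sup (htfin.mem_toFinset.mpr hy)
      have hyF : ‖y - PF F0 y‖ ≤ ε / 8 := hFc y F0 hFy
      have hxyn : ‖T x - y‖ < ε / 8 := by
        rw [← dist_eq_norm]; exact hxy
      have hdecomp : (T - PF F0 * T) x =
          ((T x - y) - PF F0 (T x - y)) + (y - PF F0 y) := by
        rw [ContinuousLinearMap.sub_apply, ContinuousLinearMap.mul_apply, map_sub]
        abel
      rw [hdecomp]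
      have h1 : ‖(T x - y) - PF F0 (T x - y)‖ ≤ ‖T x - y‖ := norm_sub_PF_le F0 _
      have h2 : ‖((T x - y) - PF F0 (T x - y)) + (y - PF F0 y)‖ ≤ ε / 8 + ε / 8 :=
        le_trans (norm_add_le _ _) (by linarith)
      have hx12 : (1 : ℝ) / 2 ≤ ‖x‖ := by
        have : ‖(2 : ℂ)‖ = 2 := by norm_num
        rw [this] at hx1
        linarith [hx1]
      calc ‖((T x - y) - PF F0 (T x - y)) + (y - PF F0 y)‖ ≤ ε / 8 + ε / 8 := h2
        _ = ε / 4 := by ring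
        _ ≤ ε / 2 * ‖x‖ := by nlinarith
    calc ‖T - PF F0 * T‖ ≤ ε / 2 := hbound
      _ < ε := by linarith

end TCK



theorem isClosed_preserving (B : Submodule ℂ H') (hB : IsClosed (B : Set H')) :
    IsClosed {A : H' →L[ℂ] H' | ∀ x ∈ B, A x ∈ B} := by
  have h : {A : H' →L[ℂ] H' | ∀ x ∈ B, A x ∈ B} =
      ⋂ x ∈ B, {A : H' →L[ℂ] H' | A x ∈ B} := by
    ext A; simp
  rw [h]
  exact isClosed_biInter fun x _ =>
    IsClosed.preimage (ContinuousLinearMap.apply ℂ H' x).continuous hB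

theorem exists_xi_ne_zero {y : H' →L[ℂ] H'} (hy : y ≠ 0) :
    ∃ p : GPath V Edg r s, y (ξ p) ≠ 0 := by
  by_contra hcon
  push_neg at hcon
  exact hy (op_ext_zero hcon)

theorem exists_coord_ne_zero {z : H'} (hz : z ≠ 0) :
    ∃ q : GPath V Edg r s, z q ≠ 0 := by
  by_contra hcon
  push_neg at hcon
  refine hz (lp.ext (funext fun q => ?_))
  simp [hcon q]



end TCKProof
end

open scoped InnerProductSpace ComplexConjugate
open TCKProof

set_option maxHeartbeats 4000000 in
/-- For a row-finite directed graph `G`, realize `T(G)` via the left regular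
Toeplitz–Cuntz–Krieger family `(Lv, Le)` on `ℓ²(E•)`.  The ideal `I_G` generated by the
gap projections `{Lv v − Σ_{e ∈ r⁻¹(v)} Le e (Le e)* : v ∈ V}` equals
`⊕_{v ∈ V} K(H_{G,v})` (the compact, block-diagonal elements of `T(G)`), and it is the
minimum essential ideal of `T(G)`: it is essential, and it is contained in every
essential closed ideal of `T(G)`. -/
theorem gap_ideal_eq_compact_blockDiagonal_and_minimum_essential
    {V Edg : Type*} (r s : Edg → V) (hfin : ∀ v : V, {e : Edg | r e = v}.Finite)
    (Lv : V → (lp (fun _ : GPath V Edg r s => ℂ) 2 →L[ℂ]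
      lp (fun _ : GPath V Edg r s => ℂ) 2))
    (Le : Edg → (lp (fun _ : GPath V Edg r s => ℂ) 2 →L[ℂ]
      lp (fun _ : GPath V Edg r s => ℂ) 2))
    (hTCK : IsLeftRegularTCK Lv Le) :
    -- `I` below is `⊕_{v ∈ V} K(H_{G,v})`, the compact block-diagonal part of `T(G)`
    ∀ I : Set (lp (fun _ : GPath V Edg r s => ℂ) 2 →L[ℂ] lp (fun _ : GPath V Edg r s => ℂ) 2),
      I = {T | T ∈ toeplitzGraphAlgebra Lv Le ∧ IsCompactOperator T ∧
        ∀ v : V, ∀ x ∈ pathSpace V Edg r s v, T x ∈ pathSpace V Edg r s v} →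
      -- `I` is a closed ideal of `T(G)` containing the gap projections,
      IsClosedIdealOf (toeplitzGraphAlgebra Lv Le) I ∧
      (∀ v : V, Lv v - ∑ e ∈ (hfin v).toFinset, Le e * star (Le e) ∈ I) ∧
      -- and is the smallest such, i.e. `I` is the ideal generated by the gaps;
      (∀ J, IsClosedIdealOf (toeplitzGraphAlgebra Lv Le) J →
        (∀ v : V, Lv v - ∑ e ∈ (hfin v).toFinset, Le e * star (Le e) ∈ J) → I ⊆ J) ∧
      -- `I` is an essential ideal,
      (∀ J, IsClosedIdealOf (toeplitzGraphAlgebra Lv Le) J → (∃ y ∈ J, y ≠ 0) →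
        ∃ x, x ∈ I ∩ J ∧ x ≠ 0) ∧
      -- and `I` is contained in every essential closed ideal of `T(G)`.
      (∀ J, IsClosedIdealOf (toeplitzGraphAlgebra Lv Le) J →
        (∀ J', IsClosedIdealOf (toeplitzGraphAlgebra Lv Le) J' → (∃ y ∈ J', y ≠ 0) →
          ∃ x, x ∈ J ∩ J' ∧ x ≠ 0) →
        I ⊆ J) := by
  intro I hI
  subst hI
  -- abbreviations
  have hblk : ∀ T ∈ toeplitzGraphAlgebra Lv Le, ∀ v : V,
      ∀ x ∈ pathSpace V Edg r s v, T x ∈ pathSpace V Edg r s v := by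
    intro T hT v x hx
    exact (TG_preserves hTCK hT).1 v x hx
  have hTGclosed : IsClosed (toeplitzGraphAlgebra Lv Le) :=
    NonUnitalStarSubalgebra.isClosed_topologicalClosure _
  have hmulmem : ∀ x ∈ toeplitzGraphAlgebra Lv Le, ∀ y ∈ toeplitzGraphAlgebra Lv Le,
      x * y ∈ toeplitzGraphAlgebra Lv Le := by
    intro x hx y hy
    exact mem_TG_iff.mpr (mul_mem (mem_TG_iff.mp hx) (mem_TG_iff.mp hy))
  have hcomp_left : ∀ (x y : lp (fun _ : GPath V Edg r s => ℂ) 2 →L[ℂ]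
      lp (fun _ : GPath V Edg r s => ℂ) 2), IsCompactOperator (⇑y) →
      IsCompactOperator (⇑(x * y)) := by
    intro x y hy
    have : IsCompactOperator (⇑x ∘ ⇑y) := hy.continuous_comp x.continuous
    convert this using 1
    rfl
  have hcomp_right : ∀ (x y : lp (fun _ : GPath V Edg r s => ℂ) 2 →L[ℂ]
      lp (fun _ : GPath V Edg r s => ℂ) 2), IsCompactOperator (⇑y) →
      IsCompactOperator (⇑(y * x)) := by
    intro x y hy
    have : IsCompactOperator (⇑y ∘ ⇑x) := hy.comp_clm x
    convert this using 1
    rfl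
  have hclosedI : IsClosedIdealOf (toeplitzGraphAlgebra Lv Le)
      {T | T ∈ toeplitzGraphAlgebra Lv Le ∧ IsCompactOperator T ∧
        ∀ v : V, ∀ x ∈ pathSpace V Edg r s v, T x ∈ pathSpace V Edg r s v} := by
    refine ⟨fun T hT => hT.1, ?_, ?_, ?_, ?_, ?_⟩
    · -- closed
      have hdecomp : {T | T ∈ toeplitzGraphAlgebra Lv Le ∧ IsCompactOperator T ∧
          ∀ v : V, ∀ x ∈ pathSpace V Edg r s v, T x ∈ pathSpace V Edg r s v} =
          (toeplitzGraphAlgebra Lv Le) ∩ ({T | IsCompactOperator ⇑T} ∩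
            ⋂ v : V, {T : lp (fun _ : GPath V Edg r s => ℂ) 2 →L[ℂ]
              lp (fun _ : GPath V Edg r s => ℂ) 2 |
              ∀ x ∈ BlkS (r := r) (s := s) v, T x ∈ BlkS (r := r) (s := s) v}) := by
        ext T
        simp only [Set.mem_setOf_eq, Set.mem_inter_iff, Set.mem_iInter]
        tauto
      rw [hdecomp]
      exact hTGclosed.inter (isClosed_setOf_isCompactOperator.inter
        (isClosed_iInter fun v => isClosed_preserving _
          (Submodule.isClosed_topologicalClosure _)))
    · -- zero
      refine ⟨mem_TG_iff.mpr (zero_mem _), ?_, ?_⟩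
      · have : IsCompactOperator (fun _ : lp (fun _ : GPath V Edg r s => ℂ) 2 =>
            (0 : lp (fun _ : GPath V Edg r s => ℂ) 2)) := isCompactOperator_zero
        convert this using 1
        rfl
      · intro v x _
        have : (0 : lp (fun _ : GPath V Edg r s => ℂ) 2) ∈ BlkS (r := r) (s := s) v :=
          Submodule.zero_mem _
        exact this
    · -- add
      rintro x ⟨hx1, hx2, hx3⟩ y ⟨hy1, hy2, hy3⟩
      refine ⟨mem_TG_iff.mpr (add_mem (mem_TG_iff.mp hx1) (mem_TG_iff.mp hy1)), ?_, ?_⟩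
      · have : IsCompactOperator (⇑x + ⇑y) := hx2.add hy2
        convert this using 1
        rfl
      · intro v z hz
        rw [ContinuousLinearMap.add_apply]
        exact Submodule.add_mem _ (hx3 v z hz) (hy3 v z hz)
    · -- smul
      rintro c x ⟨hx1, hx2, hx3⟩
      refine ⟨mem_TG_iff.mpr (SMulMemClass.smul_mem c (mem_TG_iff.mp hx1)), ?_, ?_⟩
      · have : IsCompactOperator (c • ⇑x) := hx2.smul c
        convert this using 1
        rfl
      · intro v z hz
        rw [ContinuousLinearMap.smul_apply]
        exact Submodule.smul_mem _ _ (hx3 v z hz)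
    · -- mul
      rintro x hx y ⟨hy1, hy2, hy3⟩
      refine ⟨⟨hmulmem x hx y hy1, hcomp_left x y hy2, ?_⟩,
        ⟨hmulmem y hy1 x hx, hcomp_right x y hy2, ?_⟩⟩
      · intro v z hz
        rw [ContinuousLinearMap.mul_apply]
        exact hblk x hx v _ (hy3 v z hz)
      · intro v z hz
        rw [ContinuousLinearMap.mul_apply]
        exact hy3 v _ (hblk x hx v z hz)
  have hgapI : ∀ v : V, Lv v - ∑ e ∈ (hfin v).toFinset, Le e * star (Le e) ∈
      {T | T ∈ toeplitzGraphAlgebra Lv Le ∧ IsCompactOperator T ∧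
        ∀ v : V, ∀ x ∈ pathSpace V Edg r s v, T x ∈ pathSpace V Edg r s v} := by
    intro v
    have hTGgap : Lv v - ∑ e ∈ (hfin v).toFinset, Le e * star (Le e) ∈
        toeplitzGraphAlgebra Lv Le := mem_TG_of_adjoin (gap_mem_adjoin hfin v)
    refine ⟨hTGgap, ?_, hblk _ hTGgap⟩
    rw [gap_eq_theta hTCK hfin]
    exact theta_compact _ _
  refine ⟨hclosedI, hgapI, ?_, ?_, ?_⟩
  · -- minimality
    intro J hJ hgapJ T hTI
    exact Mspan_subset_ideal hTCK hJ
      (fun lam mu h => theta_mem_ideal hTCK hfin hJ hgapJ h)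
      (compact_mem_Mspan hTCK hTI.1 hTI.2.1)
  · -- essential
    intro J hJ hyex
    obtain ⟨y, hyJ, hy0⟩ := hyex
    obtain ⟨p, hp⟩ := exists_xi_ne_zero hy0
    have hθTG : θ (ξ p) (ξ p) ∈ toeplitzGraphAlgebra Lv Le :=
      theta_mem_TG hTCK hfin rfl
    refine ⟨y * θ (ξ p) (ξ p), ⟨⟨hmulmem y (hJ.1 hyJ) _ hθTG,
      hcomp_left y _ (theta_compact _ _), hblk _ (hmulmem y (hJ.1 hyJ) _ hθTG)⟩,
      (hJ.2.2.2.2.2 _ hθTG y hyJ).2⟩, ?_⟩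
    intro h0
    apply hp
    have := congrArg (fun A : lp (fun _ : GPath V Edg r s => ℂ) 2 →L[ℂ]
      lp (fun _ : GPath V Edg r s => ℂ) 2 => A (ξ p)) h0
    simp only [ContinuousLinearMap.mul_apply, ContinuousLinearMap.zero_apply] at this
    rwa [theta_xi_xi_apply, if_pos rfl] at this
  · -- contained in every essential ideal
    intro J hJ hEss T hTI
    refine Mspan_subset_ideal hTCK hJ ?_ (compact_mem_Mspan hTCK hTI.1 hTI.2.1)
    intro lam mu hbase
    have hJv : IsClosedIdealOf (toeplitzGraphAlgebra Lv Le)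
        (Mspanv (r := r) (s := s) lam.base : Set (lp (fun _ : GPath V Edg r s => ℂ) 2 →L[ℂ] lp (fun _ : GPath V Edg r s => ℂ) 2)) := by
      refine ⟨?_, Submodule.isClosed_topologicalClosure _, Submodule.zero_mem _,
        fun a ha b hb => Submodule.add_mem _ ha hb,
        fun c a ha => Submodule.smul_mem _ c ha, ?_⟩
      · have h1 : (Submodule.span ℂ (MUv (r := r) (s := s) lam.base) : Set (lp (fun _ : GPath V Edg r s => ℂ) 2 →L[ℂ] lp (fun _ : GPath V Edg r s => ℂ) 2)) ⊆
            toeplitzGraphAlgebra Lv Le := by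
          intro A hA
          induction hA using Submodule.span_induction with
          | mem a ha =>
              obtain ⟨l2, m2, hb1, hb2, rfl⟩ := ha
              exact theta_mem_TG hTCK hfin (by rw [hb1, hb2])
          | zero => exact mem_TG_iff.mpr (zero_mem _)
          | add a b _ _ ha hb =>
              exact mem_TG_iff.mpr (add_mem (mem_TG_iff.mp ha) (mem_TG_iff.mp hb))
          | smul c a _ ha =>
              exact mem_TG_iff.mpr (SMulMemClass.smul_mem c (mem_TG_iff.mp ha))
        have h2 : (Mspanv (r := r) (s := s) lam.base : Set (lp (fun _ : GPath V Edg r s => ℂ) 2 →L[ℂ] lp (fun _ : GPath V Edg r s => ℂ) 2)) =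
            closure (Submodule.span ℂ (MUv (r := r) (s := s) lam.base) : Set (lp (fun _ : GPath V Edg r s => ℂ) 2 →L[ℂ] lp (fun _ : GPath V Edg r s => ℂ) 2)) :=
          Submodule.topologicalClosure_coe (Submodule.span ℂ (MUv (r := r) (s := s) lam.base))
        rw [h2]
        exact closure_minimal h1 hTGclosed
      · intro x hx y hy
        constructor
        · have hres := mem_topClosure_map
            (N := Submodule.span ℂ (MUv (r := r) (s := s) lam.base))
            (ContinuousLinearMap.mul ℂ _ x) ?_ hy
          · exact hres
          · rintro a ⟨l2, m2, hb1, hb2, rfl⟩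
            show x * θ (ξ l2) (ξ m2) ∈ _
            rw [mul_theta x]
            exact theta_left_mem ((TG_preserves hTCK hx).1 lam.base _
              (xi_mem_Blk hb1)) hb2
        · have hres := mem_topClosure_map
            (N := Submodule.span ℂ (MUv (r := r) (s := s) lam.base))
            ((ContinuousLinearMap.mul ℂ _).flip x) ?_ hy
          · exact hres
          · rintro a ⟨l2, m2, hb1, hb2, rfl⟩
            show θ (ξ l2) (ξ m2) * x ∈ _
            rw [theta_mul x]
            exact theta_right_mem ((TG_preserves hTCK hx).2 lam.base _
              (xi_mem_Blk hb2)) hb1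
    have hJvne : ∃ z : lp (fun _ : GPath V Edg r s => ℂ) 2 →L[ℂ] lp (fun _ : GPath V Edg r s => ℂ) 2, z ∈ (Mspanv (r := r) (s := s) lam.base : Set (lp (fun _ : GPath V Edg r s => ℂ) 2 →L[ℂ] lp (fun _ : GPath V Edg r s => ℂ) 2)) ∧ z ≠ 0 := by
      refine ⟨θ (ξ (triv lam.base)) (ξ (triv lam.base)), Submodule.le_topologicalClosure _
        (Submodule.subset_span ⟨triv lam.base, triv lam.base, rfl, rfl, rfl⟩), ?_⟩
      intro h0
      have h1 := congrArg (fun A : lp (fun _ : GPath V Edg r s => ℂ) 2 →L[ℂ]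
        lp (fun _ : GPath V Edg r s => ℂ) 2 => A (ξ (triv lam.base))) h0
      simp only [ContinuousLinearMap.zero_apply] at h1
      rw [theta_xi_xi_apply, if_pos rfl] at h1
      exact xi_ne_zero _ h1
    obtain ⟨x, hxmem, hx0⟩ := hEss _ hJv hJvne
    obtain ⟨hxJ, hxJv⟩ := hxmem
    obtain ⟨p0, hp0⟩ := exists_xi_ne_zero hx0
    obtain ⟨q0, hq0⟩ := exists_coord_ne_zero hp0
    have hbases : p0.base = lam.base ∧ q0.base = lam.base := by
      by_contra hcon
      apply hq0
      have hZc : IsClosed {A : lp (fun _ : GPath V Edg r s => ℂ) 2 →L[ℂ]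
          lp (fun _ : GPath V Edg r s => ℂ) 2 |
          ⟪(ξ q0 : lp (fun _ : GPath V Edg r s => ℂ) 2), A (ξ p0)⟫_ℂ = 0} := by
        have hcont : Continuous (fun A : lp (fun _ : GPath V Edg r s => ℂ) 2 →L[ℂ]
            lp (fun _ : GPath V Edg r s => ℂ) 2 =>
            ⟪(ξ q0 : lp (fun _ : GPath V Edg r s => ℂ) 2), A (ξ p0)⟫_ℂ) := by
          have h1 : Continuous (fun A : lp (fun _ : GPath V Edg r s => ℂ) 2 →L[ℂ]
              lp (fun _ : GPath V Edg r s => ℂ) 2 => A (ξ p0)) :=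
            (ContinuousLinearMap.apply ℂ _ (ξ p0)).continuous
          exact (innerSL ℂ (ξ q0)).continuous.comp h1
        exact isClosed_eq hcont continuous_const
      have hspan : ∀ B ∈ Submodule.span ℂ (MUv (r := r) (s := s) lam.base),
          ⟪(ξ q0 : lp (fun _ : GPath V Edg r s => ℂ) 2), B (ξ p0)⟫_ℂ = 0 := by
        intro B hB
        induction hB using Submodule.span_induction with
        | mem a ha =>
            obtain ⟨l2, m2, hb1, hb2, rfl⟩ := ha
            rw [theta_xi_xi_apply]
            split_ifs with hm
            · rw [inner_xi_xi, if_neg]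
              intro hql
              exact hcon ⟨by rw [← hm]; exact hb2, by rw [hql]; exact hb1⟩
            · rw [inner_zero_right]
        | zero => rw [ContinuousLinearMap.zero_apply, inner_zero_right]
        | add a b _ _ ha hb =>
            rw [ContinuousLinearMap.add_apply, inner_add_right, ha, hb, add_zero]
        | smul c a _ ha =>
            rw [ContinuousLinearMap.smul_apply, inner_smul_right, ha, mul_zero]
      have h2 : (Mspanv (r := r) (s := s) lam.base : Set (lp (fun _ : GPath V Edg r s => ℂ) 2 →L[ℂ] lp (fun _ : GPath V Edg r s => ℂ) 2)) =
          closure (Submodule.span ℂ (MUv (r := r) (s := s) lam.base) : Set (lp (fun _ : GPath V Edg r s => ℂ) 2 →L[ℂ] lp (fun _ : GPath V Edg r s => ℂ) 2)) :=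
        Submodule.topologicalClosure_coe (Submodule.span ℂ (MUv (r := r) (s := s) lam.base))
      have h3 := h2 ▸ hxJv
      have h4 := closure_minimal (fun B hB => hspan B hB) hZc h3
      have h5 : ⟪(ξ q0 : lp (fun _ : GPath V Edg r s => ℂ) 2), x (ξ p0)⟫_ℂ = 0 := h4
      rwa [inner_xi_left] at h5
    obtain ⟨hp0v, hq0v⟩ := hbases
    have hc : ⟪(ξ q0 : lp (fun _ : GPath V Edg r s => ℂ) 2), x (ξ p0)⟫_ℂ ≠ 0 := by
      rw [inner_xi_left]; exact hq0
    have hθ1 : θ (ξ lam) (ξ q0) ∈ toeplitzGraphAlgebra Lv Le :=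
      theta_mem_TG hTCK hfin hq0v.symm
    have hθ2 : θ (ξ p0) (ξ mu) ∈ toeplitzGraphAlgebra Lv Le :=
      theta_mem_TG hTCK hfin (by rw [hp0v]; exact hbase)
    have hmemJ : θ (ξ lam) (ξ q0) * x * θ (ξ p0) (ξ mu) ∈ J := by
      rw [mul_assoc]
      exact (hJ.2.2.2.2.2 _ hθ1 _ ((hJ.2.2.2.2.2 _ hθ2 x hxJ).2)).1
    have hsmul : θ (ξ lam) (ξ mu) =
        (⟪(ξ q0 : lp (fun _ : GPath V Edg r s => ℂ) 2), x (ξ p0)⟫_ℂ)⁻¹ •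
          (θ (ξ lam) (ξ q0) * x * θ (ξ p0) (ξ mu)) := by
      rw [theta_mul_theta_mul, smul_smul, inv_mul_cancel₀ hc, one_smul]
    rw [hsmul]
    exact hJ.2.2.2.2.1 _ _ hmemJ
end
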